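/- For all positive reals a, b: C(a,b) − S(a,b) ≤ 3(A(a,b) − N(a,b)); equivalently 3N(a,b) + C(a,b) ≤ 3A(a,b) + S(a,b). -/

import Mathlib

noncomputable def meanA (a b : ℝ) : ℝ := (a + b) / 2
noncomputable def meanG (a b : ℝ) : ℝ := Real.sqrt (a * b)
noncomputable def meanH (a b : ℝ) : ℝ := 2 * a * b / (a + b)
noncomputable def meanN (a b : ℝ) : ℝ := (a + Real.sqrt (a * b) + b) / 3
noncomputable def meanC (a b : ℝ) : ℝ := (a ^ 2 + b ^ 2) / (a + b)
noncomputable def meanS (a b : ℝ) : ℝ := Real.sqrt ((a ^ 2 + b ^ 2) / 2)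
noncomputable def meanR (a b : ℝ) : ℝ := 2 * (a ^ 2 + a * b + b ^ 2) / (3 * (a + b))
noncomputable def triDelta (a b : ℝ) : ℝ := (a - b) ^ 2 / (a + b)
noncomputable def hellinger (a b : ℝ) : ℝ := (Real.sqrt a - Real.sqrt b) ^ 2 / 2

theorem stmt_13 (a b : ℝ) (ha : 0 < a) (hb : 0 < b) :
    meanC a b - meanS a b ≤ 3 * (meanA a b - meanN a b) := by
  unfold meanC meanS meanA meanN
  set g := Real.sqrt (a * b) with hg
  set s := Real.sqrt ((a ^ 2 + b ^ 2) / 2) with hs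
  have hg2 : g ^ 2 = a * b := Real.sq_sqrt (by positivity)
  have hs2 : s ^ 2 = (a ^ 2 + b ^ 2) / 2 := Real.sq_sqrt (by positivity)
  have hg0 : 0 ≤ g := Real.sqrt_nonneg _
  have hs0 : 0 ≤ s := Real.sqrt_nonneg _
  have hab : 0 < a + b := by linarith
  rw [div_sub' (ne_of_gt hab), div_le_iff₀ hab]
  have h2 : g ≤ s := Real.sqrt_le_sqrt (by nlinarith [sq_nonneg (a - b)])
  have h1 : s + g ≤ a + b := by nlinarith [sq_nonneg (s - g)]
  nlinarith [mul_nonneg (sub_nonneg.2 h2) (sub_nonneg.2 h1)]
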